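/- arXiv:1309.6555 — 2 statements merged into one kernel-verified Lean document; each statement's English description precedes it below -/
import Mathlib

section
/- For every odd index 2k+1 (k ≥ 1), the function ψ_{2k+1}(a;·) vanishes at t = 1 + a/2 and t = 3 + 3a/2: ψ_{2k+1}(a; 1 + a/2) = ψ_{2k+1}(a; 3 + 3a/2) = 0. -/
open MeasureTheory intervalIntegral Set

/-- essential sup norm on ℝ, as a real number -/
noncomputable def nrm (f : ℝ → ℝ) : ℝ := (eLpNorm f ⊤ volume).toReal

/-- supremum norm on ℝ -/
noncomputable def supNorm (f : ℝ → ℝ) : ℝ := ⨆ t, |f t|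

/-- ψ₁ on the base interval [0, a+2] -/
noncomputable def psi1base (a t : ℝ) : ℝ :=
  if t ≤ 1 then t - 1 else if t ≤ a + 1 then 0 else t - a - 1

/-- ψ₁(a;·): even (4+2a)-periodic extension of `psi1base a` -/
noncomputable def psi1 (a : ℝ) : ℝ → ℝ := fun t =>
  let T := 4 + 2 * a
  let s := t - T * ⌊t / T⌋
  if s ≤ a + 2 then psi1base a s else psi1base a (T - s)

/-- ψ₂ on the base interval [0, a+2] -/
noncomputable def psi2base (a t : ℝ) : ℝ :=
  if t ≤ 1 then (t - 1) ^ 2 / 2 - 1 / 2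
  else if t ≤ a + 1 then -(1 / 2)
  else (t - a - 1) ^ 2 / 2 - 1 / 2

/-- ψ₂(a;·): odd (4+2a)-periodic extension of `psi2base a` -/
noncomputable def psi2 (a : ℝ) : ℝ → ℝ := fun t =>
  let T := 4 + 2 * a
  let s := t - T * ⌊t / T⌋
  if s ≤ a + 2 then psi2base a s else -psi2base a (T - s)

/-- `IsPsi a r f` : f is the (r-1)-th (4+2a)-periodic integral with zero mean
of ψ₁(a;·), i.e. f = ψ_r(a;·). -/
def IsPsi (a : ℝ) : ℕ → (ℝ → ℝ) → Prop
  | 0, _ => False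
  | 1, f => f = psi1 a
  | (n + 2), f => ∃ g, IsPsi a (n + 1) g ∧
      (∀ s t : ℝ, f t - f s = ∫ u in s..t, g u) ∧
      (∫ t in (0:ℝ)..(4 + 2 * a), f t) = 0

/-- φ₀(t) = sgn (sin t) -/
noncomputable def phi0 (t : ℝ) : ℝ := Real.sign (Real.sin t)

/-- `IsPhi r f` : f is the Euler perfect spline φ_r, the r-th 2π-periodic
integral with zero mean of φ₀. -/
noncomputable def IsPhi : ℕ → (ℝ → ℝ) → Prop
  | 0, f => f = phi0
  | (n + 1), f => ∃ g, IsPhi n g ∧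
      (∀ s t : ℝ, f t - f s = ∫ u in s..t, g u) ∧
      (∫ t in (0:ℝ)..(2 * Real.pi), f t) = 0

/-- membership in L^r_{∞,∞}(ℝ): x^{(r-1)} locally absolutely continuous,
x and x^{(r)} essentially bounded. -/
def MemL (r : ℕ) (x : ℝ → ℝ) : Prop :=
  ContDiff ℝ (r - 1 : ℕ) x ∧
  (∀ s t : ℝ, iteratedDeriv (r - 1) x t - iteratedDeriv (r - 1) x s =
      ∫ u in s..t, iteratedDeriv r x u) ∧
  MemLp x ⊤ volume ∧ MemLp (iteratedDeriv r x) ⊤ volume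

/-- the spline Ψ_{a,b,λ}(t) = b · f(λ t), where f = ψ_r(a;·) -/
noncomputable def Psi (b lam : ℝ) (f : ℝ → ℝ) : ℝ → ℝ := fun t => b * f (lam * t)
section Aux

variable {a : ℝ}

lemma psi1base_anti (ha : 0 ≤ a) {u : ℝ} (h0 : 0 ≤ u) (h1 : u ≤ a + 2) :
    psi1base a (a + 2 - u) = -psi1base a u := by
  unfold psi1base
  split_ifs <;> linarith

lemma psi1base_bound {u : ℝ} (h0 : 0 ≤ u) (h1 : u ≤ a + 2) : |psi1base a u| ≤ 1 := by
  unfold psi1base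
  split_ifs <;> rw [abs_le] <;> constructor <;> linarith

lemma psi1_def (a t : ℝ) : psi1 a t =
    (if t - (4 + 2 * a) * ⌊t / (4 + 2 * a)⌋ ≤ a + 2
     then psi1base a (t - (4 + 2 * a) * ⌊t / (4 + 2 * a)⌋)
     else psi1base a ((4 + 2 * a) - (t - (4 + 2 * a) * ⌊t / (4 + 2 * a)⌋))) := rfl

lemma s_eq (ha : 0 ≤ a) (t : ℝ) :
    t - (4 + 2 * a) * ⌊t / (4 + 2 * a)⌋ = (4 + 2 * a) * Int.fract (t / (4 + 2 * a)) := by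
  have hT : (0:ℝ) < 4 + 2 * a := by linarith
  rw [Int.fract, mul_sub, mul_div_cancel₀ _ hT.ne']

lemma psi1base_meas : Measurable (psi1base a) := by
  unfold psi1base
  apply Measurable.ite (measurableSet_le measurable_id measurable_const)
  · exact measurable_id.sub measurable_const
  · exact Measurable.ite (measurableSet_le measurable_id measurable_const) measurable_const
      ((measurable_id.sub measurable_const).sub measurable_const)

lemma psi1_meas : Measurable (psi1 a) := by
  have hs : Measurable (fun t : ℝ => t - (4 + 2 * a) * (⌊t / (4 + 2 * a)⌋ : ℤ)) := by
    exact measurable_id.sub (measurable_const.mul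
      (measurable_from_top.comp ((measurable_id.div_const _).floor)))
  have hdef : psi1 a = fun t =>
      (if t - (4 + 2 * a) * ⌊t / (4 + 2 * a)⌋ ≤ a + 2
       then psi1base a (t - (4 + 2 * a) * ⌊t / (4 + 2 * a)⌋)
       else psi1base a ((4 + 2 * a) - (t - (4 + 2 * a) * ⌊t / (4 + 2 * a)⌋))) := rfl
  rw [hdef]
  exact Measurable.ite (measurableSet_le hs measurable_const) (psi1base_meas.comp hs)
    (psi1base_meas.comp (measurable_const.sub hs))

end Aux
section Aux2

variable {a : ℝ}

lemma psi1_bound (ha : 0 ≤ a) (t : ℝ) : |psi1 a t| ≤ 1 := by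
  have hT : (0:ℝ) < 4 + 2 * a := by linarith
  rw [psi1_def, s_eq ha]
  set x := Int.fract (t / (4 + 2 * a)) with hx
  have hx0 : 0 ≤ x := Int.fract_nonneg _
  have hx1 : x < 1 := Int.fract_lt_one _
  have h0 : 0 ≤ (4 + 2 * a) * x := mul_nonneg hT.le hx0
  have h1 : (4 + 2 * a) * x < 4 + 2 * a := by
    have := mul_lt_mul_of_pos_left hx1 hT
    linarith
  split_ifs with h
  · exact psi1base_bound h0 h
  · exact psi1base_bound (by linarith) (by linarith)

lemma psi1_intInt (ha : 0 ≤ a) : ∀ s t : ℝ, IntervalIntegrable (psi1 a) volume s t := by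
  intro s t
  constructor <;>
  · refine Integrable.mono' (g := fun _ => (1:ℝ)) ?_ psi1_meas.aestronglyMeasurable ?_
    · exact integrableOn_const measure_Ioc_lt_top.ne
    · filter_upwards with u
      simpa using psi1_bound ha u

lemma psi1_even (ha : 0 ≤ a) (t : ℝ) : psi1 a (-t) = psi1 a t := by
  have hT : (0:ℝ) < 4 + 2 * a := by linarith
  rw [psi1_def, psi1_def, s_eq ha (-t), s_eq ha t, neg_div]
  by_cases hx : Int.fract (t / (4 + 2 * a)) = 0
  · rw [Int.fract_neg_eq_zero.mpr hx, hx]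
  · rw [Int.fract_neg hx]
    set x := Int.fract (t / (4 + 2 * a)) with hxd
    have hx0 : 0 < x := lt_of_le_of_ne (Int.fract_nonneg _) (Ne.symm hx)
    have hx1 : x < 1 := Int.fract_lt_one _
    set u := (4 + 2 * a) * x with hu
    have e1 : (4 + 2 * a) * (1 - x) = (4 + 2 * a) - u := by rw [hu]; ring
    have e2 : (4 + 2 * a) - ((4 + 2 * a) - u) = u := by ring
    rw [e1, e2]
    split_ifs with h1 h2 h2
    · have hc : (4 + 2 * a) - u = u := by linarith
      rw [hc]
    · rfl
    · rfl
    · push_neg at h1 h2; linarith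

lemma psi1_anti (ha : 0 ≤ a) (t : ℝ) : psi1 a (t + (a + 2)) = -psi1 a t := by
  have hT : (0:ℝ) < 4 + 2 * a := by linarith
  rw [psi1_def, psi1_def, s_eq ha (t + (a + 2)), s_eq ha t]
  have hdiv : (t + (a + 2)) / (4 + 2 * a) = t / (4 + 2 * a) + 1 / 2 := by
    field_simp
    ring
  rw [hdiv]
  set x := Int.fract (t / (4 + 2 * a)) with hxd
  have hx0 : 0 ≤ x := Int.fract_nonneg _
  have hx1 : x < 1 := Int.fract_lt_one _
  have hfl : t / (4 + 2 * a) + 1 / 2 = (⌊t / (4 + 2 * a)⌋ : ℝ) + (x + 1 / 2) := by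
    rw [hxd, Int.fract]; ring
  rw [hfl, Int.fract_intCast_add]
  by_cases hhalf : x < 1 / 2
  · rw [Int.fract_eq_self.mpr ⟨by linarith, by linarith⟩]
    set u := (4 + 2 * a) * x with hu
    have hu0 : 0 ≤ u := mul_nonneg hT.le hx0
    have huh : u < a + 2 := by
      have := mul_lt_mul_of_pos_left hhalf hT
      linarith
    have e1 : (4 + 2 * a) * (x + 1 / 2) = u + (a + 2) := by rw [hu]; ring
    have e2 : (4 + 2 * a) - (u + (a + 2)) = (a + 2) - u := by ring
    rw [e1, e2]
    split_ifs with h1 h2 h2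
    · have hu' : u = 0 := le_antisymm (by linarith) hu0
      rw [hu', show (0:ℝ) + (a + 2) = a + 2 - 0 by ring]
      exact psi1base_anti ha le_rfl (by linarith)
    · linarith
    · exact psi1base_anti ha hu0 (by linarith)
    · linarith
  · push_neg at hhalf
    have hfr : Int.fract (x + 1 / 2) = x - 1 / 2 := by
      rw [show x + 1 / 2 = ((1:ℤ) : ℝ) + (x - 1 / 2) by push_cast; ring, Int.fract_intCast_add,
        Int.fract_eq_self.mpr ⟨by linarith, by linarith⟩]
    rw [hfr]
    set u := (4 + 2 * a) * x with hu
    have huh : a + 2 ≤ u := by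
      have := mul_le_mul_of_nonneg_left hhalf hT.le
      linarith
    have huT : u < 4 + 2 * a := by
      have := mul_lt_mul_of_pos_left hx1 hT
      linarith
    have e1 : (4 + 2 * a) * (x - 1 / 2) = u - (a + 2) := by rw [hu]; ring
    rw [e1]
    split_ifs with h1 h2 h2
    · have hu' : u = a + 2 := le_antisymm h2 huh
      rw [hu']
      exact psi1base_anti ha (by linarith) le_rfl
    · have e : (4 + 2 * a) - u = (a + 2) - (u - (a + 2)) := by ring
      rw [e, psi1base_anti ha (by linarith) (by linarith), neg_neg]
    · linarith
    · linarith
end Aux2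
lemma psi_bundle (a : ℝ) (ha : 0 ≤ a) :
    ∀ (n : ℕ) (f : ℝ → ℝ), IsPsi a n f →
      (∀ s t : ℝ, IntervalIntegrable f volume s t) ∧
      (∀ t, f (t + (a + 2)) = -f t) ∧
      (Odd n → ∀ t, f (-t) = f t) ∧
      (Even n → ∀ t, f (-t) = -f t)
  | 0, _, hf => hf.elim
  | 1, f, hf => by
      subst hf
      exact ⟨psi1_intInt ha, psi1_anti ha, fun _ t => psi1_even ha t,
        fun h => absurd h (by decide)⟩
  | (n + 2), f, hf => by
      obtain ⟨g, hg, hfg, hmean⟩ := hf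
      obtain ⟨gInt, gAnti, gOddEven, gEvenOdd⟩ := psi_bundle a ha (n + 1) g hg
      have hT : (0:ℝ) < a + 2 := by linarith
      have hfe : f = fun t => f 0 + ∫ u in (0:ℝ)..t, g u := by
        funext t
        have := hfg 0 t
        linarith
      have fCont : Continuous f := by
        rw [hfe]
        exact continuous_const.add (intervalIntegral.continuous_primitive gInt 0)
      have fInt : ∀ s t : ℝ, IntervalIntegrable f volume s t := fun s t =>
        fCont.intervalIntegrable s t
      have hconst : ∀ t, f (t + (a + 2)) + f t = f (a + 2) + f 0 := by
        intro t
        have h1 : f (t + (a + 2)) - f (a + 2) = ∫ u in (a + 2)..(t + (a + 2)), g u := hfg _ _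
        have h2 : (∫ u in (0:ℝ)..t, g (u + (a + 2))) = ∫ u in (a + 2)..(t + (a + 2)), g u := by
          have := intervalIntegral.integral_comp_add_right (a := 0) (b := t) g (a + 2)
          simpa using this
        have h3 : (∫ u in (0:ℝ)..t, g (u + (a + 2))) = -∫ u in (0:ℝ)..t, g u := by
          simp only [gAnti]
          exact intervalIntegral.integral_neg
        have h4 : f t - f 0 = ∫ u in (0:ℝ)..t, g u := hfg 0 t
        linarith
      have hc : f (a + 2) + f 0 = 0 := by
        have hsplit : (∫ t in (0:ℝ)..(4 + 2 * a), f t) =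
            (∫ t in (0:ℝ)..(a + 2), f t) + ∫ t in (a + 2)..(4 + 2 * a), f t :=
          (intervalIntegral.integral_add_adjacent_intervals (fInt 0 (a + 2))
            (fInt (a + 2) (4 + 2 * a))).symm
        have h2 : (∫ u in (0:ℝ)..(a + 2), f (u + (a + 2))) =
            ∫ t in (a + 2)..(4 + 2 * a), f t := by
          have := intervalIntegral.integral_comp_add_right (a := 0) (b := a + 2) f (a + 2)
          rw [this, show (0:ℝ) + (a + 2) = a + 2 by ring,
            show (a + 2) + (a + 2) = 4 + 2 * a by ring]
        have h3 : (∫ u in (0:ℝ)..(a + 2), f (u + (a + 2))) =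
            (f (a + 2) + f 0) * (a + 2) - ∫ u in (0:ℝ)..(a + 2), f u := by
          have he : (fun u => f (u + (a + 2))) = fun u => (f (a + 2) + f 0) - f u :=
            funext fun u => by have := hconst u; linarith
          rw [he, intervalIntegral.integral_sub intervalIntegrable_const (fInt 0 (a + 2)),
            intervalIntegral.integral_const, smul_eq_mul]
          ring
        have hmul : (f (a + 2) + f 0) * (a + 2) = 0 := by linarith [hmean]
        rcases mul_eq_zero.mp hmul with h | h
        · exact h
        · linarith
      have fAnti : ∀ t, f (t + (a + 2)) = -f t := fun t => by
        have := hconst t; linarith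
      have hcomp_neg : ∀ t : ℝ, (∫ u in (0:ℝ)..(-t), g u) = -∫ u in (0:ℝ)..t, g (-u) := by
        intro t
        have h := intervalIntegral.integral_comp_neg (a := 0) (b := t) g
        simp only [neg_zero] at h
        rw [h, intervalIntegral.integral_symm]
      refine ⟨fInt, fAnti, ?_, ?_⟩
      · intro hodd t
        have hgodd : ∀ u, g (-u) = -g u := by
          refine gEvenOdd (Nat.even_iff.mpr ?_)
          have := Nat.odd_iff.mp hodd
          omega
        have h1 : f t - f 0 = ∫ u in (0:ℝ)..t, g u := hfg 0 t
        have h2 : f (-t) - f 0 = ∫ u in (0:ℝ)..(-t), g u := hfg 0 (-t)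
        have h3 : (∫ u in (0:ℝ)..t, g (-u)) = -∫ u in (0:ℝ)..t, g u := by
          simp only [hgodd]
          exact intervalIntegral.integral_neg
        have h4 := hcomp_neg t
        linarith
      · intro heven
        have hgeven : ∀ u, g (-u) = g u := by
          refine gOddEven (Nat.odd_iff.mpr ?_)
          have := Nat.even_iff.mp heven
          omega
        have hsum : ∀ t, f t + f (-t) = 2 * f 0 := by
          intro t
          have h1 : f t - f 0 = ∫ u in (0:ℝ)..t, g u := hfg 0 t
          have h2 : f (-t) - f 0 = ∫ u in (0:ℝ)..(-t), g u := hfg 0 (-t)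
          have h3 : (∫ u in (0:ℝ)..t, g (-u)) = ∫ u in (0:ℝ)..t, g u := by
            simp only [hgeven]
          have h4 := hcomp_neg t
          linarith
        have hA : f (0 + (a + 2)) = -f 0 := fAnti 0
        have hB : f (-(a + 2) + (a + 2)) = -f (-(a + 2)) := fAnti (-(a + 2))
        rw [zero_add] at hA
        rw [neg_add_cancel] at hB
        have hf0 : f 0 = 0 := by
          have := hsum (a + 2)
          linarith
        intro t
        have := hsum t
        linarith

theorem stmt5 (a : ℝ) (ha : 0 ≤ a) (k : ℕ) (hk : 1 ≤ k) (f : ℝ → ℝ)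
    (hf : IsPsi a (2 * k + 1) f) :
    f (1 + a / 2) = 0 ∧ f (3 + 3 * a / 2) = 0 := by
  obtain ⟨-, fAnti, fEven, -⟩ := psi_bundle a ha (2 * k + 1) f hf
  have hEv := fEven ⟨k, by ring⟩
  have h1 : f (1 + a / 2) = 0 := by
    have hA := fAnti (-(1 + a / 2))
    rw [show -(1 + a / 2) + (a + 2) = 1 + a / 2 by ring] at hA
    have hB := hEv (1 + a / 2)
    linarith
  refine ⟨h1, ?_⟩
  have hA := fAnti (1 + a / 2)
  rw [show (1 + a / 2) + (a + 2) = 3 + 3 * a / 2 by ring] at hA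
  rw [hA, h1, neg_zero]
end

section
/- If a function Ψ attains its minimum at τ₁ and maximum at τ₂ on an interval, x is bounded with ‖x‖ ≤ ‖Ψ‖, and Ψ'(τ) > 0, x(τ) = Ψ(τ), x'(τ) > Ψ'(τ) at some τ ∈ (τ₁,τ₂), then for sufficiently small ε > 0 the function x_ε := (1−ε)x satisfies x_ε(τ₁) > Ψ(τ₁), x_ε(τ₂) < Ψ(τ₂), and there exists δ > 0 with x_ε(τ+δ) > Ψ(τ+δ) and x_ε(τ−δ) < Ψ(τ−δ); consequently x_ε − Ψ has at least 3 sign changes on (τ₁, τ₂). -/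
open MeasureTheory intervalIntegral Set

open Topology Filter

set_option maxHeartbeats 1000000 in
theorem stmt15 (Ψ x : ℝ → ℝ) (hΨ : ContDiff ℝ 1 Ψ) (hx : ContDiff ℝ 1 x)
    (hΨbd : BddAbove (Set.range fun t => |Ψ t|))
    (hxbd : BddAbove (Set.range fun t => |x t|))
    (τ₁ τ₂ : ℝ) (hmono : StrictMonoOn Ψ (Set.Icc τ₁ τ₂))
    (hmin : Ψ τ₁ = -supNorm Ψ) (hmax : Ψ τ₂ = supNorm Ψ)
    (hnx : supNorm x ≤ supNorm Ψ)
    (τ : ℝ) (hτ : τ ∈ Set.Ioo τ₁ τ₂)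
    (hΨ' : 0 < deriv Ψ τ) (heq : x τ = Ψ τ) (hx' : deriv Ψ τ < deriv x τ) :
    ∃ ε₀ > 0, ∀ ε : ℝ, 0 < ε → ε < ε₀ →
      (1 - ε) * x τ₁ > Ψ τ₁ ∧ (1 - ε) * x τ₂ < Ψ τ₂ ∧
      (∃ δ > 0, (1 - ε) * x (τ + δ) > Ψ (τ + δ) ∧
        (1 - ε) * x (τ - δ) < Ψ (τ - δ)) ∧
      ∃ t₁ t₂ t₃ t₄ : ℝ, τ₁ < t₁ ∧ t₁ < t₂ ∧ t₂ < t₃ ∧ t₃ < t₄ ∧ t₄ < τ₂ ∧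
        ((1 - ε) * x t₁ - Ψ t₁) * ((1 - ε) * x t₂ - Ψ t₂) < 0 ∧
        ((1 - ε) * x t₂ - Ψ t₂) * ((1 - ε) * x t₃ - Ψ t₃) < 0 ∧
        ((1 - ε) * x t₃ - Ψ t₃) * ((1 - ε) * x t₄ - Ψ t₄) < 0 := by
  obtain ⟨hτ1, hτ2⟩ := hτ
  have hτ12 : τ₁ < τ₂ := hτ1.trans hτ2
  set S := supNorm Ψ with hSdef
  have hSpos : 0 < S := by
    have h := hmono ⟨le_refl τ₁, hτ12.le⟩ ⟨hτ12.le, le_refl τ₂⟩ hτ12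
    rw [hmin, hmax] at h; linarith
  have hnx' : (⨆ t, |x t|) ≤ S := hnx
  have hxle : ∀ t, |x t| ≤ S := fun t => le_trans (le_ciSup hxbd t) hnx'
  have hder : HasDerivAt (fun t => x t - Ψ t) (deriv x τ - deriv Ψ τ) τ :=
    ((hx.differentiable one_ne_zero τ).hasDerivAt).sub ((hΨ.differentiable one_ne_zero τ).hasDerivAt)
  set d := deriv x τ - deriv Ψ τ with hddef
  have hdpos : 0 < d := by rw [hddef]; linarith
  have hslope : Filter.Tendsto (slope (fun t => x t - Ψ t) τ) (𝓝[≠] τ) (𝓝 d) :=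
    hasDerivAt_iff_tendsto_slope.mp hder
  have h1 : ∀ᶠ t in 𝓝[≠] τ, d / 2 < slope (fun t => x t - Ψ t) τ t :=
    hslope.eventually (eventually_gt_nhds (by linarith))
  have h2 : ∀ᶠ t in 𝓝[≠] τ, t ∈ Set.Ioo τ₁ τ₂ :=
    eventually_nhdsWithin_of_eventually_nhds
      (Filter.eventually_of_mem (Ioo_mem_nhds hτ1 hτ2) fun t ht => ht)
  have h3 := h1.and h2
  obtain ⟨η, hηpos, hball⟩ := Metric.mem_nhdsWithin_iff.mp h3
  have hδpos : 0 < η / 2 := by positivity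
  set δ := η / 2 with hδdef
  have hkp := hball (a := τ + δ)
    ⟨by rw [Metric.mem_ball, Real.dist_eq, show τ + δ - τ = δ by ring, abs_of_pos hδpos]
        linarith,
     by simp only [Set.mem_compl_iff, Set.mem_singleton_iff]; intro h; nlinarith⟩
  have hkm := hball (a := τ - δ)
    ⟨by rw [Metric.mem_ball, Real.dist_eq, show τ - δ - τ = -δ by ring, abs_neg,
          abs_of_pos hδpos]
        linarith,
     by simp only [Set.mem_compl_iff, Set.mem_singleton_iff]; intro h; nlinarith⟩
  have hA : d / 2 * δ < x (τ + δ) - Ψ (τ + δ) := by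
    have h := hkp.1
    simp only [slope_def_field] at h
    rw [show τ + δ - τ = δ by ring] at h
    have h' := (lt_div_iff₀ hδpos).mp h
    linarith [heq]
  have hB : x (τ - δ) - Ψ (τ - δ) < -(d / 2) * δ := by
    have h := hkm.1
    simp only [slope_def_field] at h
    rw [show τ - δ - τ = -δ by ring, div_neg] at h
    have h2' : (x (τ - δ) - Ψ (τ - δ) - (x τ - Ψ τ)) / δ < -(d / 2) := lt_neg.mp h
    have h3' := (div_lt_iff₀ hδpos).mp h2'
    linarith [heq]
  refine ⟨min 1 (d * δ / (2 * (S + 1))), lt_min one_pos (by positivity), ?_⟩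
  intro ε hε hεε₀
  have hε1 : ε < 1 := hεε₀.trans_le (min_le_left _ _)
  have hε2 : ε * (2 * (S + 1)) < d * δ :=
    (lt_div_iff₀ (by positivity)).mp (hεε₀.trans_le (min_le_right _ _))
  have hg1 : (1 - ε) * x τ₁ > Ψ τ₁ := by
    rw [hmin]
    have h1' := neg_le_of_abs_le (hxle τ₁)
    nlinarith [mul_pos hε hSpos, mul_le_mul_of_nonneg_left h1' (by linarith : (0:ℝ) ≤ 1 - ε)]
  have hg2 : (1 - ε) * x τ₂ < Ψ τ₂ := by
    rw [hmax]
    have h1' := le_of_abs_le (hxle τ₂)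
    nlinarith [mul_pos hε hSpos, mul_le_mul_of_nonneg_left h1' (by linarith : (0:ℝ) ≤ 1 - ε)]
  have hQp : (1 - ε) * x (τ + δ) > Ψ (τ + δ) := by
    have hxb := le_of_abs_le (hxle (τ + δ))
    nlinarith [mul_le_mul_of_nonneg_left hxb hε.le]
  have hQm : (1 - ε) * x (τ - δ) < Ψ (τ - δ) := by
    have hxb := neg_le_of_abs_le (hxle (τ - δ))
    nlinarith [mul_le_mul_of_nonneg_left hxb hε.le]
  refine ⟨hg1, hg2, ⟨δ, hδpos, hQp, hQm⟩, ?_⟩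
  have hfc : Continuous fun t => (1 - ε) * x t - Ψ t :=
    (continuous_const.mul hx.continuous).sub hΨ.continuous
  have ho1 : IsOpen {t : ℝ | 0 < (1 - ε) * x t - Ψ t} := isOpen_lt continuous_const hfc
  obtain ⟨r₁, hr₁, hb₁⟩ := Metric.isOpen_iff.mp ho1 τ₁ (sub_pos.mpr hg1)
  have hm1 : τ₁ < τ - δ := hkm.2.1
  set m₁ := min r₁ (τ - δ - τ₁) with hm₁def
  have hm₁pos : 0 < m₁ := lt_min hr₁ (by linarith)
  set t₁ := τ₁ + m₁ / 2 with ht₁def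
  have hft₁ : 0 < (1 - ε) * x t₁ - Ψ t₁ := by
    apply hb₁
    rw [Metric.mem_ball, Real.dist_eq, show t₁ - τ₁ = m₁ / 2 by rw [ht₁def]; ring,
      abs_of_pos (by linarith)]
    have := min_le_left r₁ (τ - δ - τ₁); linarith
  have ho2 : IsOpen {t : ℝ | (1 - ε) * x t - Ψ t < 0} := isOpen_lt hfc continuous_const
  obtain ⟨r₂, hr₂, hb₂⟩ := Metric.isOpen_iff.mp ho2 τ₂ (sub_neg.mpr hg2)
  have hm2 : τ + δ < τ₂ := hkp.2.2
  set m₂ := min r₂ (τ₂ - (τ + δ)) with hm₂def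
  have hm₂pos : 0 < m₂ := lt_min hr₂ (by linarith)
  set t₄ := τ₂ - m₂ / 2 with ht₄def
  have hft₄ : (1 - ε) * x t₄ - Ψ t₄ < 0 := by
    apply hb₂
    rw [Metric.mem_ball, Real.dist_eq, show t₄ - τ₂ = -(m₂ / 2) by rw [ht₄def]; ring,
      abs_neg, abs_of_pos (by linarith)]
    have := min_le_left r₂ (τ₂ - (τ + δ)); linarith
  refine ⟨t₁, τ - δ, τ + δ, t₄, ?_, ?_, ?_, ?_, ?_, ?_, ?_, ?_⟩
  · rw [ht₁def]; linarith
  · have := min_le_right r₁ (τ - δ - τ₁); rw [ht₁def]; linarith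
  · linarith
  · have := min_le_right r₂ (τ₂ - (τ + δ)); rw [ht₄def]; linarith
  · rw [ht₄def]; linarith
  · exact mul_neg_of_pos_of_neg hft₁ (sub_neg.mpr hQm)
  · exact mul_neg_of_neg_of_pos (sub_neg.mpr hQm) (sub_pos.mpr hQp)
  · exact mul_neg_of_pos_of_neg (sub_pos.mpr hQp) hft₄
end
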